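/- Let K and N be positive integers, f₀, x₀, λ ∈ ℝ, f(t) = f₀ + λ·t, and let x : ℕ → ℝ satisfy x(0) = x₀ and x(t+1) = (K·f(t) + N·x(t))/(K+N) for all t ∈ ℕ. Then the sequence f(t) − x(t) converges, as t → ∞, to λ·(K+N)/K. -/
import Mathlib


theorem hk_gap_limit
    (K N : ℕ) (hK : 0 < K) (hN : 0 < N)
    (f₀ x₀ l : ℝ) (f : ℕ → ℝ) (hf : ∀ t : ℕ, f t = f₀ + l * (t : ℝ))
    (x : ℕ → ℝ) (hx0 : x 0 = x₀)
    (hx : ∀ t : ℕ, x (t + 1) = ((K : ℝ) * f t + (N : ℝ) * x t) / ((K : ℝ) + (N : ℝ))) :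
    Filter.Tendsto (fun t : ℕ => f t - x t) Filter.atTop
      (nhds (l * ((K : ℝ) + (N : ℝ)) / (K : ℝ))) := by
  have hKpos : (0:ℝ) < K := by exact_mod_cast hK
  have hNpos : (0:ℝ) < N := by exact_mod_cast hN
  have hS : (0:ℝ) < (K:ℝ) + N := by linarith
  set r : ℝ := (N:ℝ) / ((K:ℝ) + N) with hr
  set L : ℝ := l * ((K:ℝ) + (N:ℝ)) / (K:ℝ) with hL
  have key : ∀ t : ℕ, f t - x t - L = r ^ t * (f 0 - x 0 - L) := by
    intro t
    induction t with
    | zero => simp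
    | succ n ih =>
      have h1 : f (n+1) - x (n+1) = l + r * (f n - x n) := by
        have hSne : (K:ℝ) + N ≠ 0 := ne_of_gt hS
        rw [hx n, hf (n+1), hf n, hr]
        push_cast
        field_simp
        ring
      have h2 : l + r * L - L = 0 := by
        rw [hL, hr]
        field_simp
        ring
      calc f (n+1) - x (n+1) - L = r * (f n - x n - L) + (l + r * L - L) := by
            rw [h1]; ring
        _ = r ^ (n+1) * (f 0 - x 0 - L) := by rw [h2, ih]; ring
  have hr0 : (0:ℝ) ≤ r := by positivity
  have hr1 : r < 1 := by
    rw [hr, div_lt_one hS]; linarith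
  have htend : Filter.Tendsto (fun t : ℕ => r ^ t * (f 0 - x 0 - L) + L)
      Filter.atTop (nhds L) := by
    have := (tendsto_pow_atTop_nhds_zero_of_lt_one hr0 hr1).mul_const (f 0 - x 0 - L)
    simpa using this.add_const L
  refine htend.congr fun t => ?_
  have := key t
  linarith
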